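/- Define R(a) = [ (a²/4)·∫_{−1}^{1} Δ_a(w)^{−5/2}·(Δ_a(w)+1)² dw ] / ∫_{−1}^{1} Δ_a(w)^{1/2} dw for a > 0, where Δ_a(w) = (1−a²)·w² + a². Then R(a) → +∞ as a → 0⁺ and R(a) → 1/2 as a → ∞. -/

import Mathlib

open Filter Set intervalIntegral

/-- The classical `L²`-mean-curvature bound
`R(a) = (a²/4)·∫_{-1}^{1} Δ_a(w)^{-5/2}·(Δ_a(w)+1)² dw / ∫_{-1}^{1} Δ_a(w)^{1/2} dw`
satisfies `R(a) → ∞` as `a → 0⁺` and `R(a) → 1/2` as `a → ∞`. -/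
lemma denom_eval (a : ℝ) (ha : 1 < a) :
    (∫ w in (-1:ℝ)..1, ((1 - a^2) * w^2 + a^2) ^ ((1:ℝ)/2))
      = 1 + a^2 / Real.sqrt (a^2-1) * Real.arcsin (Real.sqrt (a^2-1) / a) := by
  have ha0 : (0:ℝ) < a := by linarith
  set b := Real.sqrt (a^2-1) with hbdef
  have hb2 : b^2 = a^2-1 := Real.sq_sqrt (by nlinarith)
  have hb0 : 0 < b := Real.sqrt_pos.mpr (by nlinarith)
  have hba : b < a := by nlinarith [sq_nonneg (a-b)]
  set F : ℝ → ℝ := fun w => (w * Real.sqrt ((1-a^2)*w^2+a^2) + (a^2/b) * Real.arcsin (b*w/a))/2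
    with hF
  have key : ∀ w ∈ Set.uIcc (-1:ℝ) 1,
      HasDerivAt F (((1 - a^2) * w^2 + a^2) ^ ((1:ℝ)/2)) w := by
    intro w hw
    rw [Set.uIcc_of_le (by norm_num)] at hw
    have hw2 : w^2 ≤ 1 := by nlinarith [hw.1, hw.2]
    have hgpos : 0 < (1 - a^2) * w^2 + a^2 := by nlinarith
    set s := Real.sqrt ((1-a^2)*w^2+a^2) with hsdef
    have hs0 : 0 < s := Real.sqrt_pos.mpr hgpos
    have hss : s * s = (1-a^2)*w^2+a^2 := Real.mul_self_sqrt hgpos.le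
    have hg : HasDerivAt (fun w : ℝ => (1-a^2)*w^2+a^2) ((1-a^2)*(2*w)) w := by
      simpa using ((hasDerivAt_pow 2 w).const_mul (1-a^2)).add_const (a^2)
    have hsq : HasDerivAt (fun w => Real.sqrt ((1-a^2)*w^2+a^2))
        (1/(2*s) * ((1-a^2)*(2*w))) w := (Real.hasDerivAt_sqrt hgpos.ne').comp w hg
    have hin : HasDerivAt (fun w : ℝ => b*w/a) (b/a) w := by
      simpa using ((hasDerivAt_id w).const_mul b).div_const a
    have hx1 : (b*w/a)^2 < 1 := by
      rw [div_pow, mul_pow, hb2, div_lt_one (by positivity)]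
      nlinarith
    have harc : HasDerivAt (fun w => Real.arcsin (b*w/a))
        ((1 / Real.sqrt (1 - (b*w/a)^2)) * (b/a)) w := by
      exact (Real.hasDerivAt_arcsin (by nlinarith) (by nlinarith)).comp w hin
    have hsqrt1 : Real.sqrt (1 - (b*w/a)^2) = s / a := by
      rw [show 1 - (b*w/a)^2 = ((1-a^2)*w^2+a^2)/a^2 by
        field_simp; nlinarith]
      rw [Real.sqrt_div hgpos.le, Real.sqrt_sq ha0.le]
    have : HasDerivAt F
        ((1 * s + w * (1/(2*s) * ((1-a^2)*(2*w))) +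
          (a^2/b) * ((1 / (s/a)) * (b/a)))/2) w := by
      rw [hsqrt1] at harc
      exact (((hasDerivAt_id w).mul hsq).add (harc.const_mul (a^2/b))).div_const 2
    convert this using 1
    rw [← Real.sqrt_eq_rpow, ← hsdef]
    field_simp
    linear_combination hss
  rw [intervalIntegral.integral_eq_sub_of_hasDerivAt key]
  · simp only [hF]
    rw [show ((1:ℝ)-a^2)*1^2+a^2 = 1 by ring, show ((1:ℝ)-a^2)*(-1)^2+a^2 = 1 by ring,
      show b*1/a = b/a by ring, show b*(-1)/a = -(b/a) by ring, Real.arcsin_neg, Real.sqrt_one]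
    ring
  · apply ContinuousOn.intervalIntegrable
    intro w hw
    rw [Set.uIcc_of_le (by norm_num)] at hw
    have hw2 : w^2 ≤ 1 := by nlinarith [hw.1, hw.2]
    have hgpos : 0 < (1 - a^2) * w^2 + a^2 := by nlinarith
    have hc : ContinuousAt (fun w : ℝ => ((1-a^2)*w^2+a^2) ^ ((1:ℝ)/2)) w := by
      apply ContinuousAt.rpow_const
      · fun_prop
      · exact Or.inl hgpos.ne'
    exact hc.continuousWithinAt

set_option maxHeartbeats 1000000 in
lemma num_eval (a : ℝ) (ha : 1 < a) :
    (∫ w in (-1:ℝ)..1,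
        ((1 - a^2) * w^2 + a^2) ^ (-(5:ℝ)/2) * ((1 - a^2) * w^2 + a^2 + 1)^2)
      = 2 / Real.sqrt (a^2-1) * Real.arcsin (Real.sqrt (a^2-1) / a)
        + 4/a^2 + 2*(a^2+2)/(3*a^4) := by
  have ha0 : (0:ℝ) < a := by linarith
  set b := Real.sqrt (a^2-1) with hbdef
  have hb2 : b^2 = a^2-1 := Real.sq_sqrt (by nlinarith)
  have hb0 : 0 < b := Real.sqrt_pos.mpr (by nlinarith)
  have hba : b < a := by nlinarith [sq_nonneg (a-b)]
  have key : ∀ w ∈ Set.uIcc (-1:ℝ) 1,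
      HasDerivAt (fun w =>
        (1/b) * Real.arcsin (b*w/a)
        + 2*w/(a^2 * Real.sqrt ((1-a^2)*w^2+a^2))
        + (3*a^2*w - 2*(a^2-1)*w^3) /
            (3*a^4*(((1-a^2)*w^2+a^2) * Real.sqrt ((1-a^2)*w^2+a^2))))
        (((1 - a^2) * w^2 + a^2) ^ (-(5:ℝ)/2) * ((1 - a^2) * w^2 + a^2 + 1)^2) w := by
    intro w hw
    rw [Set.uIcc_of_le (by norm_num)] at hw
    have hw2 : w^2 ≤ 1 := by nlinarith [hw.1, hw.2]
    have hgpos : 0 < (1 - a^2) * w^2 + a^2 := by nlinarith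
    set s := Real.sqrt ((1-a^2)*w^2+a^2) with hsdef
    have hs0 : 0 < s := Real.sqrt_pos.mpr hgpos
    have hss : s * s = (1-a^2)*w^2+a^2 := Real.mul_self_sqrt hgpos.le
    have hg : HasDerivAt (fun w : ℝ => (1-a^2)*w^2+a^2) ((1-a^2)*(2*w)) w := by
      simpa using ((hasDerivAt_pow 2 w).const_mul (1-a^2)).add_const (a^2)
    have hsq : HasDerivAt (fun w => Real.sqrt ((1-a^2)*w^2+a^2))
        (1/(2*s) * ((1-a^2)*(2*w))) w := (Real.hasDerivAt_sqrt hgpos.ne').comp w hg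
    have hin : HasDerivAt (fun w : ℝ => b*w/a) (b/a) w := by
      simpa using ((hasDerivAt_id w).const_mul b).div_const a
    have hx1 : (b*w/a)^2 < 1 := by
      rw [div_pow, mul_pow, hb2, div_lt_one (by positivity)]
      nlinarith
    have harc : HasDerivAt (fun w => Real.arcsin (b*w/a))
        ((1 / Real.sqrt (1 - (b*w/a)^2)) * (b/a)) w :=
      (Real.hasDerivAt_arcsin (by nlinarith) (by nlinarith)).comp w hin
    have hsqrt1 : Real.sqrt (1 - (b*w/a)^2) = s / a := by
      rw [show 1 - (b*w/a)^2 = ((1-a^2)*w^2+a^2)/a^2 by field_simp; nlinarith]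
      rw [Real.sqrt_div hgpos.le, Real.sqrt_sq ha0.le]
    rw [hsqrt1] at harc
    have ht1 : HasDerivAt (fun w => (1/b) * Real.arcsin (b*w/a)) (1/s) w := by
      refine (harc.const_mul (1/b)).congr_deriv ?_
      field_simp
    have hc2 : HasDerivAt (fun y : ℝ => 2*y) 2 w := by
      simpa using (hasDerivAt_id w).const_mul 2
    have ht2 : HasDerivAt (fun w => 2*w/(a^2 * Real.sqrt ((1-a^2)*w^2+a^2)))
        (2/(s*s*s)) w := by
      refine (hc2.div (hsq.const_mul (a^2)) (by positivity)).congr_deriv ?_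
      rw [← hsdef]
      field_simp
      ring_nf
      linear_combination hss
    have hp : HasDerivAt (fun w : ℝ => 3*a^2*w - 2*(a^2-1)*w^3)
        (3*a^2 - 2*(a^2-1)*(3*w^2)) w := by
      have h1 := ((hasDerivAt_id w).const_mul (3*a^2))
      have h2 := ((hasDerivAt_pow 3 w).const_mul (2*(a^2-1)))
      simpa using h1.fun_sub h2
    have ht3 : HasDerivAt (fun w => (3*a^2*w - 2*(a^2-1)*w^3) /
          (3*a^4*(((1-a^2)*w^2+a^2) * Real.sqrt ((1-a^2)*w^2+a^2))))
        (1/((s*s)^2*s)) w := by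
      refine (hp.div ((hg.fun_mul hsq).const_mul (3*a^4)) (by positivity)).congr_deriv ?_
      rw [← hsdef, ← hss]
      field_simp
      ring_nf
      linear_combination (3*a^2 + 6*w^2 - 6*a^2*w^2) * hss
    have hrpow : ((1 - a^2) * w^2 + a^2) ^ (-(5:ℝ)/2)
        = (((1-a^2)*w^2+a^2)^2 * s)⁻¹ := by
      rw [show (-(5:ℝ)/2) = -(((2:ℕ):ℝ) + 1/2) by norm_num, Real.rpow_neg hgpos.le,
        Real.rpow_add hgpos, Real.rpow_natCast, ← Real.sqrt_eq_rpow, ← hsdef]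
    refine ((ht1.add ht2).add ht3).congr_deriv ?_
    rw [hrpow, ← hss]
    field_simp
    ring
  rw [intervalIntegral.integral_eq_sub_of_hasDerivAt key]
  · rw [show ((1:ℝ)-a^2)*1^2+a^2 = 1 by ring, show ((1:ℝ)-a^2)*(-1)^2+a^2 = 1 by ring,
      show b*1/a = b/a by ring, show b*(-1)/a = -(b/a) by ring, Real.arcsin_neg,
      Real.sqrt_one]
    field_simp
    ring
  · apply ContinuousOn.intervalIntegrable
    intro w hw
    rw [Set.uIcc_of_le (by norm_num)] at hw
    have hw2 : w^2 ≤ 1 := by nlinarith [hw.1, hw.2]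
    have hgpos : 0 < (1 - a^2) * w^2 + a^2 := by nlinarith
    have hc : ContinuousAt (fun w : ℝ =>
        ((1-a^2)*w^2+a^2) ^ (-(5:ℝ)/2) * ((1 - a^2) * w^2 + a^2 + 1)^2) w := by
      apply ContinuousAt.mul
      · apply ContinuousAt.rpow_const
        · fun_prop
        · exact Or.inl hgpos.ne'
      · fun_prop
    exact hc.continuousWithinAt

-- Part 1 bound: for 0 < a < 1, R a ≥ 1/(16 a)
lemma part1_bound (a : ℝ) (ha0 : 0 < a) (ha1 : a < 1) :
    (16*a)⁻¹ ≤
      (a^2/4 * ∫ w in (-1:ℝ)..1,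
          ((1 - a^2) * w^2 + a^2) ^ (-(5:ℝ)/2) * ((1 - a^2) * w^2 + a^2 + 1)^2) /
        ∫ w in (-1:ℝ)..1, ((1 - a^2) * w^2 + a^2) ^ ((1:ℝ)/2) := by
  have hgpos : ∀ w : ℝ, 0 < (1 - a^2) * w^2 + a^2 := by
    intro w; nlinarith [mul_nonneg (by nlinarith : (0:ℝ) ≤ 1 - a^2) (sq_nonneg w), pow_pos ha0 2]
  set f : ℝ → ℝ := fun w =>
    ((1 - a^2) * w^2 + a^2) ^ (-(5:ℝ)/2) * ((1 - a^2) * w^2 + a^2 + 1)^2 with hf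
  have hfc : Continuous f := by
    apply Continuous.mul
    · apply Continuous.rpow_const
      · fun_prop
      · exact fun w => Or.inl (hgpos w).ne'
    · fun_prop
  have hgc : Continuous (fun w : ℝ => ((1 - a^2) * w^2 + a^2) ^ ((1:ℝ)/2)) := by
    apply Continuous.rpow_const
    · fun_prop
    · exact fun w => Or.inl (hgpos w).ne'
  have hf0 : ∀ w, 0 ≤ f w := by
    intro w
    apply mul_nonneg (Real.rpow_nonneg (hgpos w).le _) (sq_nonneg _)
  -- denominator bounds
  have hD_le : (∫ w in (-1:ℝ)..1, ((1 - a^2) * w^2 + a^2) ^ ((1:ℝ)/2)) ≤ 2 := by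
    have := intervalIntegral.integral_mono_on (μ := MeasureTheory.volume) (by norm_num : (-1:ℝ) ≤ 1)
      (hgc.intervalIntegrable _ _) (continuous_const.intervalIntegrable _ _)
      (fun w hw => by
        have hw2 : w^2 ≤ 1 := by nlinarith [hw.1, hw.2]
        exact Real.rpow_le_one (hgpos w).le
          (by nlinarith [mul_le_mul_of_nonneg_left hw2 (by nlinarith : (0:ℝ) ≤ 1 - a^2)])
          (by norm_num))
    simp only [intervalIntegral.integral_const, smul_eq_mul, mul_one] at this
    linarith
  have hD_pos : 0 < ∫ w in (-1:ℝ)..1, ((1 - a^2) * w^2 + a^2) ^ ((1:ℝ)/2) := by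
    have key : ∀ w ∈ Set.Icc (-1:ℝ) 1, a ≤ ((1 - a^2) * w^2 + a^2) ^ ((1:ℝ)/2) := by
      intro w _
      calc a = (a^2) ^ ((1:ℝ)/2) := by rw [← Real.sqrt_eq_rpow, Real.sqrt_sq ha0.le]
        _ ≤ ((1-a^2)*w^2+a^2) ^ ((1:ℝ)/2) := Real.rpow_le_rpow (by positivity)
            (by nlinarith [mul_nonneg (by nlinarith : (0:ℝ) ≤ 1 - a^2) (sq_nonneg w)])
            (by norm_num)
    have := intervalIntegral.integral_mono_on (μ := MeasureTheory.volume) (by norm_num : (-1:ℝ) ≤ 1)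
      (continuous_const.intervalIntegrable _ _) (hgc.intervalIntegrable _ _) key
    simp only [intervalIntegral.integral_const, smul_eq_mul] at this
    linarith
  -- numerator bound
  have hN : 1/(2*a^3) ≤ ∫ w in (-1:ℝ)..1, f w := by
    have step1 : (∫ w in (-a:ℝ)..a, f w) ≤ ∫ w in (-1:ℝ)..1, f w := by
      apply intervalIntegral.integral_mono_interval (by linarith) (by linarith) (by linarith)
      · exact MeasureTheory.ae_of_all _ hf0
      · exact hfc.intervalIntegrable _ _
    have step2 : (∫ w in (-a:ℝ)..a, (4*a^4)⁻¹) ≤ ∫ w in (-a:ℝ)..a, f w := by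
      apply intervalIntegral.integral_mono_on (μ := MeasureTheory.volume) (by linarith)
        (continuous_const.intervalIntegrable _ _) (hfc.intervalIntegrable _ _)
      intro w hw
      have hw2 : w^2 ≤ a^2 := by nlinarith [hw.1, hw.2]
      have hgw := hgpos w
      have hg1 : (1 - a^2) * w^2 + a^2 ≤ 1 := by
        nlinarith [mul_le_mul_of_nonneg_left (hw2.trans (by nlinarith : a^2 ≤ 1))
          (by nlinarith : (0:ℝ) ≤ 1 - a^2)]
      have hg2 : (1 - a^2) * w^2 + a^2 ≤ 2*a^2 := by
        nlinarith [mul_nonneg (sq_nonneg a) (sq_nonneg w)]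
      have e1 : (((1-a^2)*w^2+a^2)^2)⁻¹ = ((1-a^2)*w^2+a^2) ^ (-(2:ℝ)) := by
        rw [show (-(2:ℝ)) = -((2:ℕ):ℝ) by norm_num, Real.rpow_neg hgw.le, Real.rpow_natCast]
      calc (4*a^4)⁻¹ ≤ (((1-a^2)*w^2+a^2)^2)⁻¹ := by
            apply inv_anti₀ (by positivity) (by nlinarith)
        _ = ((1-a^2)*w^2+a^2) ^ (-(2:ℝ)) := e1
        _ ≤ ((1-a^2)*w^2+a^2) ^ (-(5:ℝ)/2) :=
            Real.rpow_le_rpow_of_exponent_ge hgw hg1 (by norm_num)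
        _ ≤ f w := le_mul_of_one_le_right (Real.rpow_nonneg hgw.le _) (by nlinarith)
    have step3 : (∫ w in (-a:ℝ)..a, (4*a^4)⁻¹) = 1/(2*a^3) := by
      rw [intervalIntegral.integral_const, smul_eq_mul]
      field_simp
      ring
    linarith
  -- combine
  have hX : 0 ≤ a^2/4 * ∫ w in (-1:ℝ)..1, f w := by
    apply mul_nonneg (by positivity)
    have h0 : (0:ℝ) < 1/(2*a^3) := by positivity
    linarith
  have h1 : (a^2/4 * ∫ w in (-1:ℝ)..1, f w)/2
      ≤ (a^2/4 * ∫ w in (-1:ℝ)..1, f w) / (∫ w in (-1:ℝ)..1, ((1 - a^2) * w^2 + a^2) ^ ((1:ℝ)/2)) :=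
    div_le_div_of_nonneg_left hX hD_pos hD_le
  have h2 : (16*a)⁻¹ ≤ (a^2/4 * ∫ w in (-1:ℝ)..1, f w)/2 := by
    have : a^2/4 * (1/(2*a^3)) ≤ a^2/4 * ∫ w in (-1:ℝ)..1, f w :=
      mul_le_mul_of_nonneg_left hN (by positivity)
    have he : a^2/4 * (1/(2*a^3)) = 1/(8*a) := by
      field_simp; ring
    rw [he] at this
    calc (16*a)⁻¹ = (1/(8*a))/2 := by field_simp; ring
      _ ≤ _ := by linarith
  linarith

theorem stmt_14 (R : ℝ → ℝ)
    (hR : ∀ a : ℝ, R a =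
      (a^2/4 * ∫ w in (-1:ℝ)..1,
          ((1 - a^2) * w^2 + a^2) ^ (-(5:ℝ)/2) * ((1 - a^2) * w^2 + a^2 + 1)^2) /
        ∫ w in (-1:ℝ)..1, ((1 - a^2) * w^2 + a^2) ^ ((1:ℝ)/2)) :
    Filter.Tendsto R (nhdsWithin 0 (Set.Ioi 0)) Filter.atTop ∧
    Filter.Tendsto R Filter.atTop (nhds (1/2)) := by

  constructor
  · -- a → 0⁺
    have hmem : Set.Ioo (0:ℝ) 1 ∈ nhdsWithin 0 (Set.Ioi 0) :=
      Ioo_mem_nhdsGT_of_mem (by constructor <;> norm_num)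
    refine Filter.tendsto_atTop_mono' _ (f₁ := fun a => (16*a)⁻¹) ?_ ?_
    · filter_upwards [hmem] with a ha
      rw [hR a]
      exact part1_bound a ha.1 ha.2
    · apply Filter.Tendsto.inv_tendsto_nhdsGT_zero
      rw [tendsto_nhdsWithin_iff]
      constructor
      · have h := (continuous_const.mul continuous_id).tendsto (0:ℝ)
          (f := fun a : ℝ => 16*a)
        simp only [id, mul_zero] at h
        exact h.mono_left nhdsWithin_le_nhds
      · filter_upwards [self_mem_nhdsWithin] with a ha
        have ha' : (0:ℝ) < a := ha
        exact Set.mem_Ioi.mpr (by positivity)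
  · -- a → ∞
    have hev : ∀ᶠ a : ℝ in Filter.atTop, R a = 1/2 +
        (2/3 + 1/(3*a^2)) /
          (1 + a^2/Real.sqrt (a^2-1) * Real.arcsin (Real.sqrt (a^2-1)/a)) := by
      filter_upwards [Filter.eventually_gt_atTop 1] with a ha
      have ha0 : (0:ℝ) < a := by linarith
      have hb0 : 0 < Real.sqrt (a^2-1) := Real.sqrt_pos.mpr (by nlinarith)
      have hA : 0 ≤ Real.arcsin (Real.sqrt (a^2-1)/a) :=
        Real.arcsin_nonneg.mpr (by positivity)
      have hden : 0 < 1 + a^2/Real.sqrt (a^2-1) * Real.arcsin (Real.sqrt (a^2-1)/a) := by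
        have : 0 ≤ a^2/Real.sqrt (a^2-1) * Real.arcsin (Real.sqrt (a^2-1)/a) := by positivity
        linarith
      rw [hR a, num_eval a ha, denom_eval a ha]
      field_simp
      ring
    have hts : Filter.Tendsto
        (fun a : ℝ => 1 + a^2/Real.sqrt (a^2-1) * Real.arcsin (Real.sqrt (a^2-1)/a))
        Filter.atTop Filter.atTop := by
      refine Filter.tendsto_atTop_mono' _ (f₁ := fun a : ℝ => 1 + a) ?_ ?_
      · filter_upwards [Filter.eventually_gt_atTop 1] with a ha
        have ha0 : (0:ℝ) < a := by linarith
        have hb0 : 0 < Real.sqrt (a^2-1) := Real.sqrt_pos.mpr (by nlinarith)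
        have hb1 : Real.sqrt (a^2-1) < a := by
          nlinarith [Real.sq_sqrt (show (0:ℝ) ≤ a^2-1 by nlinarith), hb0]
        have hfrac : Real.sqrt (a^2-1)/a ≤ 1 := by
          rw [div_le_one ha0]; linarith
        have harc : Real.sqrt (a^2-1)/a ≤ Real.arcsin (Real.sqrt (a^2-1)/a) := by
          have hpos : 0 < Real.arcsin (Real.sqrt (a^2-1)/a) :=
            Real.arcsin_pos.mpr (by positivity)
          have hsin := Real.sin_lt hpos
          rw [Real.sin_arcsin
            (le_trans (by norm_num : (-1:ℝ) ≤ 0) (by positivity)) hfrac] at hsin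
          linarith
        have : a ≤ a^2/Real.sqrt (a^2-1) * Real.arcsin (Real.sqrt (a^2-1)/a) := by
          calc a = a^2/Real.sqrt (a^2-1) * (Real.sqrt (a^2-1)/a) := by
                field_simp
            _ ≤ _ := by
                apply mul_le_mul_of_nonneg_left harc (by positivity)
        linarith
      · exact tendsto_atTop_add_const_left _ 1 Filter.tendsto_id
    have hnum : Filter.Tendsto (fun a : ℝ => 2/3 + 1/(3*a^2)) Filter.atTop
        (nhds (2/3)) := by
      have h3 : Filter.Tendsto (fun a : ℝ => 3*a^2) Filter.atTop Filter.atTop := by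
        apply Filter.Tendsto.const_mul_atTop (by norm_num : (0:ℝ) < 3)
        exact tendsto_pow_atTop (by norm_num)
      have := Filter.Tendsto.div_atTop (tendsto_const_nhds (x := (1:ℝ))) h3
      simpa using tendsto_const_nhds.add this
    have hzero := hnum.div_atTop hts
    have hfin := (tendsto_const_nhds (x := (1/2:ℝ))).add hzero
    rw [add_zero] at hfin
    refine Filter.Tendsto.congr' ?_ hfin
    filter_upwards [hev] with a h
    exact h.symm
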